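/- Let ρ: W → GL(V) be an n-dimensional representation of a group W, and let s₁, …, s_k ∈ W be such that each s_i acts on V as a generalized reflection with reflection vector α_i of eigenvalue λ_i. Suppose α₁, …, α_k are linearly independent. Then for every 0 ≤ d < k, the intersection ⋂_{1 ≤ i ≤ k} V_{d,s_i}^− is the zero subspace of ⋀^d V. -/

import Mathlib

open Module ExteriorAlgebra

variable {F : Type*} [Field F] {V : Type*} [AddCommGroup V] [Module F V]
  {V₂ : Type*} [AddCommGroup V₂] [Module F V₂]

/-- A (generalized) reflection: a diagonalizable endomorphism `s` with
`rank (s - id) = 1`. -/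
def IsReflection (s : V →ₗ[F] V) : Prop :=
  (⨆ μ : F, Module.End.eigenspace s μ) = ⊤ ∧
    Module.finrank F (LinearMap.range (s - LinearMap.id)) = 1

theorem extPower_map_mem (d : ℕ) (f : V →ₗ[F] V₂) {x : ExteriorAlgebra F V}
    (hx : x ∈ ⋀[F]^d V) : ExteriorAlgebra.map f x ∈ ⋀[F]^d V₂ := by
  have h : Submodule.map (ExteriorAlgebra.map f).toLinearMap (⋀[F]^d V) ≤ ⋀[F]^d V₂ := by
    rw [exteriorPower, Submodule.map_pow, ι_range_map_map]
    have h1 : Submodule.map (ι F (M := V₂)) (LinearMap.range f)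
        ≤ LinearMap.range (ι F (M := V₂)) := by
      rintro - ⟨y, -, rfl⟩
      exact ⟨y, rfl⟩
    exact pow_le_pow_left' h1 d
  exact h ⟨x, hx, rfl⟩

/-- The linear map induced on `d`-th exterior powers by a linear map; for the inclusion
`H.subtype` of a subspace `H ⊆ V` this realizes `⋀^d H` as a subspace of `⋀^d V`
(via its range). -/
noncomputable def extMap (d : ℕ) (f : V →ₗ[F] V₂) : (⋀[F]^d V) →ₗ[F] (⋀[F]^d V₂) :=
  (ExteriorAlgebra.map f).toLinearMap.restrict (fun _ hx => extPower_map_mem d f hx)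

@[simp] theorem extMap_apply_coe (d : ℕ) (f : V →ₗ[F] V₂) (x : ⋀[F]^d V) :
    (extMap d f x : ExteriorAlgebra F V₂) = ExteriorAlgebra.map f x := rfl

variable {W : Type*} [Group W]

/-- The representation of `W` on the `d`-th exterior power `⋀^d V` induced by a
representation of `W` on `V`, given by `w · (v₁ ∧ ⋯ ∧ v_d) = (w·v₁) ∧ ⋯ ∧ (w·v_d)`. -/
noncomputable def extRep (ρ : Representation F W V) (d : ℕ) :
    Representation F W (⋀[F]^d V) where
  toFun w := extMap d (ρ w)
  map_one' := by
    apply LinearMap.ext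
    intro x
    apply Subtype.ext
    simp only [extMap_apply_coe, map_one]
    show (ExteriorAlgebra.map (LinearMap.id) : _) _ = _
    rw [ExteriorAlgebra.map_id]
    rfl
  map_mul' a b := by
    apply LinearMap.ext
    intro x
    apply Subtype.ext
    simp only [extMap_apply_coe, map_mul]
    show (ExteriorAlgebra.map (ρ a ∘ₗ ρ b) : _) _ = _
    rw [← ExteriorAlgebra.map_comp_map]
    rfl

/-- Irreducibility (simplicity) of a representation: the space is nonzero and the only
invariant subspaces are `⊥` and `⊤`. -/
def Representation.IsIrreducible' (ρ : Representation F W V) : Prop :=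
  Nontrivial V ∧
    ∀ U : Submodule F V, (∀ w : W, ∀ v ∈ U, ρ w v ∈ U) → U = ⊥ ∨ U = ⊤

/-- Isomorphism of two representations of `W`: an equivariant linear equivalence. -/
def Representation.Iso {F W : Type*} [CommSemiring F] [Monoid W]
    {V₁ V₂ : Type*} [AddCommMonoid V₁] [Module F V₁] [AddCommMonoid V₂] [Module F V₂]
    (ρ₁ : Representation F W V₁) (ρ₂ : Representation F W V₂) : Prop :=
  ∃ e : V₁ ≃ₗ[F] V₂, ∀ (w : W) (v : V₁), e (ρ₁ w v) = ρ₂ w (e v)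

/-- The wedge product `v 0 ∧ v 1 ∧ ⋯ ∧ v (d-1)` as an element of `⋀^d V`. -/
noncomputable def wedge (d : ℕ) (v : Fin d → V) : ⋀[F]^d V :=
  ⟨ExteriorAlgebra.ιMulti F d v, ExteriorAlgebra.ιMulti_range F d ⟨v, rfl⟩⟩

noncomputable def ctr (φ : Module.Dual F V) : ExteriorAlgebra F V →ₗ[F] ExteriorAlgebra F V :=
  CliffordAlgebra.contractLeft (Q := 0) φ

theorem ctr_ι_mul (φ : Module.Dual F V) (a : V) (b : ExteriorAlgebra F V) :
    ctr φ (ι F a * b) = φ a • b - ι F a * ctr φ b :=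
  CliffordAlgebra.contractLeft_ι_mul φ a b

theorem ctr_algebraMap (φ : Module.Dual F V) (r : F) :
    ctr φ (algebraMap F (ExteriorAlgebra F V) r) = 0 :=
  CliffordAlgebra.contractLeft_algebraMap (Q := 0) φ r

theorem mul_mem_power {n : ℕ} (v : V) {x : ExteriorAlgebra F V} (hx : x ∈ ⋀[F]^n V) :
    ι F v * x ∈ ⋀[F]^(n+1) V := by
  show _ ∈ LinearMap.range (ι F) ^ (n+1)
  rw [pow_succ']
  exact Submodule.mul_mem_mul (LinearMap.mem_range_self _ _) hx

theorem ctr_mem (φ : Module.Dual F V) :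
    ∀ (n : ℕ) (x : ExteriorAlgebra F V), x ∈ ⋀[F]^n V →
      ctr φ x ∈ ⋀[F]^(n-1) V ∧ (n = 0 → ctr φ x = 0) := by
  intro n x hx
  refine Submodule.pow_induction_on_left' (LinearMap.range (ι F (M := V)))
    (C := fun n x _ => ctr φ x ∈ ⋀[F]^(n-1) V ∧ (n = 0 → ctr φ x = 0)) ?_ ?_ ?_ hx
  · intro r
    simp [ctr_algebraMap]
  · intro x y i hx hy ihx ihy
    exact ⟨by simpa using add_mem ihx.1 ihy.1, fun h => by simp [ihx.2 h, ihy.2 h]⟩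
  · rintro m ⟨v, rfl⟩ i x hx ih
    rw [ctr_ι_mul]
    refine ⟨sub_mem (Submodule.smul_mem _ _ (by simpa using hx)) ?_, fun h => by omega⟩
    match i, ih with
    | 0, ih => simp [ih.2 rfl]
    | (i+1), ih => simpa using mul_mem_power v (by simpa using ih.1)

theorem map_reflection_eq (s : V →ₗ[F] V) (φ : Module.Dual F V) (a : V)
    (hs : ∀ v, s v = v + φ v • a) {n : ℕ} {x : ExteriorAlgebra F V} (hx : x ∈ ⋀[F]^n V) :
    ExteriorAlgebra.map s x = x + ι F a * ctr φ x := by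
  have anti : ∀ (v : V) (z : ExteriorAlgebra F V),
      ι F v * (ι F a * z) = -(ι F a * (ι F v * z)) := by
    intro v z
    have h := ι_add_mul_swap (R := F) v a
    have : ι F v * ι F a = -(ι F a * ι F v) := eq_neg_of_add_eq_zero_left h
    rw [← mul_assoc, this, neg_mul, mul_assoc]
  refine Submodule.pow_induction_on_left' (LinearMap.range (ι F (M := V)))
    (C := fun n x _ => ExteriorAlgebra.map s x = x + ι F a * ctr φ x) ?_ ?_ ?_ hx
  · intro r
    simp [ctr_algebraMap]
  · intro x y i hx hy ihx ihy
    simp only [map_add, ihx, ihy, mul_add]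
    abel
  · rintro m ⟨v, rfl⟩ i x hx ih
    have h1 : ExteriorAlgebra.map s (ι F v * x) = (ι F v + φ v • ι F a) * ExteriorAlgebra.map s x := by
      rw [map_mul]
      congr 1
      rw [ExteriorAlgebra.map_apply_ι, hs v, map_add, map_smul]
    rw [h1, ih, ctr_ι_mul]
    rw [add_mul, mul_add, mul_add, smul_mul_assoc, smul_mul_assoc, ← mul_assoc (ι F a),
      ι_sq_zero, zero_mul, smul_zero, add_zero, anti v (ctr φ x), mul_sub, mul_smul_comm]
    abel

theorem exists_dual_fn {k : ℕ} {α : Fin k → V} (hli : LinearIndependent F α) (i₀ : Fin k) :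
    ∃ φ : Module.Dual F V, φ (α i₀) = 1 ∧ ∀ i, i ≠ i₀ → φ (α i) = 0 := by
  have b : Basis (Fin k) F (Submodule.span F (Set.range α)) := Basis.span hli
  obtain ⟨g, hg⟩ := LinearMap.exists_extend ((Basis.span hli).coord i₀)
  have key : ∀ i, g (α i) = (Basis.span hli).coord i₀ (Basis.span hli i) := by
    intro i
    have := congrArg (fun f => f (Basis.span hli i)) hg
    simpa [Basis.span_apply hli i] using this
  refine ⟨g, ?_, fun i hi => ?_⟩
  · rw [key i₀, Basis.coord_apply, Basis.repr_self]
    simp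
  · rw [key i, Basis.coord_apply, Basis.repr_self, Finsupp.single_apply]
    simp [hi]

theorem key_vanish : ∀ (d k : ℕ), d < k → ∀ (α : Fin k → V), LinearIndependent F α →
    ∀ x : ExteriorAlgebra F V, x ∈ ⋀[F]^d V → (∀ i, ι F (α i) * x = 0) → x = 0 := by
  intro d
  induction d with
  | zero =>
    intro k hk α hli x hx hz
    obtain ⟨r, rfl⟩ := Submodule.mem_one.mp (by simpa using hx)
    have i0 : Fin k := ⟨0, hk⟩
    have h := hz i0
    rw [← Algebra.commutes, ← Algebra.smul_def, smul_eq_zero] at h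
    rcases h with h | h
    · rw [h, map_zero]
    · exact absurd ((ExteriorAlgebra.ι_eq_zero_iff (R := F) _).mp h) (hli.ne_zero i0)
  | succ d IH =>
    intro k hk α hli x hx hz
    -- k = k' + 1
    obtain ⟨k', rfl⟩ : ∃ k', k = k' + 1 := ⟨k - 1, by omega⟩
    obtain ⟨φ, hφ0, hφ⟩ := exists_dual_fn hli 0
    -- x = ι (α 0) * ctr φ x
    have hX : x = ι F (α 0) * ctr φ x := by
      have h := ctr_ι_mul φ (α 0) x
      rw [hz 0, map_zero, hφ0, one_smul] at h
      exact sub_eq_zero.mp h.symm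
    set y := ctr φ x with hy
    have hym : y ∈ ⋀[F]^d V := by simpa using (ctr_mem φ (d+1) x hx).1
    set y' := y - ι F (α 0) * ctr φ y with hy'
    have hy'm : y' ∈ ⋀[F]^d V := by
      refine sub_mem hym ?_
      match d, hym with
      | 0, hym =>
        rw [(ctr_mem φ 0 y hym).2 rfl, mul_zero]
        exact zero_mem _
      | (d+1), hym =>
        exact mul_mem_power _ (by simpa using (ctr_mem φ (d+1) y hym).1)
    -- for i ≠ 0, ι (α i) * y' = 0
    have hz' : ∀ j : Fin k', ι F (α (Fin.succ j)) * y' = 0 := by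
      intro j
      have h0 : ι F (α (Fin.succ j)) * x = 0 := hz (Fin.succ j)
      rw [hX] at h0
      have h := congrArg (ctr φ) h0
      rw [map_zero, ctr_ι_mul, hφ (Fin.succ j) (Fin.succ_ne_zero j), zero_smul, zero_sub,
        ctr_ι_mul, hφ0, one_smul, neg_eq_zero] at h
      rw [hy']
      exact h
    have hy'0 : y' = 0 :=
      IH k' (by omega) (α ∘ Fin.succ) (hli.comp Fin.succ (Fin.succ_injective k'))
        y' hy'm hz'
    have : y = ι F (α 0) * ctr φ y := by
      have := sub_eq_zero.mp hy'0
      exact this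
    rw [hX, this, ← mul_assoc, ι_sq_zero, zero_mul]


theorem exists_refl_dual [FiniteDimensional F V] (f : V →ₗ[F] V) (a : V) (ha : a ≠ 0)
    (hr : Module.finrank F (LinearMap.range (f - LinearMap.id)) = 1)
    (hmem : a ∈ LinearMap.range (f - LinearMap.id)) :
    ∃ φ : Module.Dual F V, ∀ v, f v = v + φ v • a := by
  set g := f - LinearMap.id with hg
  have hspan : Submodule.span F {a} = LinearMap.range g := by
    apply Submodule.eq_of_le_of_finrank_le
    · rw [Submodule.span_singleton_le_iff_mem]; exact hmem
    · rw [hr, finrank_span_singleton ha]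
  set e := LinearEquiv.toSpanNonzeroSingleton F V a ha with he
  set ψ := g.codRestrict (Submodule.span F {a})
      (fun v => hspan ▸ LinearMap.mem_range_self g v) with hψ
  refine ⟨e.symm.toLinearMap ∘ₗ ψ, fun v => ?_⟩
  have h1 : (e (e.symm (ψ v)) : V) = g v := by
    rw [LinearEquiv.apply_symm_apply]
    rfl
  rw [LinearEquiv.toSpanNonzeroSingleton_apply] at h1
  have h2 : (e.symm.toLinearMap ∘ₗ ψ) v • a = g v := h1
  rw [h2, hg]
  simp

/-- Let `ρ : W → GL(V)` be an `n`-dimensional representation and let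
`s 1, …, s k ∈ W` act on `V` as generalized reflections with reflection vectors `α i` of
eigenvalues `lam i`. If `α 1, …, α k` are linearly independent, then for every
`0 ≤ d < k` the intersection `⋂_{1 ≤ i ≤ k} V_{d, s i}^-` is the zero subspace of
`⋀^d V`. -/
theorem iInf_eigenspace_eq_bot_of_lt
    [FiniteDimensional F V] (ρ : Representation F W V)
    {k : ℕ} (s : Fin k → W) (α : Fin k → V) (lam : Fin k → F)
    (hrefl : ∀ i, IsReflection (ρ (s i)))
    (hα : ∀ i, α i ≠ 0)
    (hαmem : ∀ i, α i ∈ LinearMap.range (ρ (s i) - LinearMap.id))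
    (heig : ∀ i, ρ (s i) (α i) = lam i • α i)
    (hlam : ∀ i, lam i ≠ 1)
    (hli : LinearIndependent F α) :
    ∀ d : ℕ, d < k →
      (⨅ i : Fin k, Module.End.eigenspace ((extRep ρ d) (s i)) (lam i)) = ⊥ := by
  intro d hdk
  rw [eq_bot_iff]
  intro x hx
  rw [Submodule.mem_iInf] at hx
  -- functionals for each reflection
  have hφ : ∀ i, ∃ φ : Module.Dual F V, ∀ v, ρ (s i) v = v + φ v • α i := fun i =>
    exists_refl_dual (ρ (s i)) (α i) (hα i) (hrefl i).2 (hαmem i)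
  choose φ hφ using hφ
  have hXd : (x : ExteriorAlgebra F V) ∈ ⋀[F]^d V := x.2
  have hmul : ∀ i, ι F (α i) * (x : ExteriorAlgebra F V) = 0 := by
    intro i
    have heq : ExteriorAlgebra.map (ρ (s i)) (x : ExteriorAlgebra F V)
        = lam i • (x : ExteriorAlgebra F V) := by
      have h := Module.End.mem_eigenspace_iff.mp (hx i)
      have h2 := congrArg (Subtype.val) h
      have hE : (((extRep ρ d) (s i) x : ⋀[F]^d V) : ExteriorAlgebra F V)
          = ExteriorAlgebra.map (ρ (s i)) (x : ExteriorAlgebra F V) := rfl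
      simpa [hE] using h2
    rw [map_reflection_eq (ρ (s i)) (φ i) (α i) (hφ i) hXd] at heq
    have h3 : ι F (α i) * ctr (φ i) (x : ExteriorAlgebra F V)
        = (lam i - 1) • (x : ExteriorAlgebra F V) := by
      rw [sub_smul, one_smul, ← heq]
      abel
    have h4 : (lam i - 1) • (ι F (α i) * (x : ExteriorAlgebra F V)) = 0 := by
      rw [← mul_smul_comm, ← h3, ← mul_assoc, ι_sq_zero, zero_mul]
    rcases smul_eq_zero.mp h4 with h | h
    · exact absurd (sub_eq_zero.mp h) (hlam i)
    · exact h
  have := key_vanish d k hdk α hli (x : ExteriorAlgebra F V) hXd hmul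
  simpa [Submodule.mem_bot] using Subtype.ext this
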